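/- Let ξ_1, ..., ξ_m be i.i.d. standard exponential random variables and ρ_R > 0. Define SINR_r = ξ_r / (1/ρ_R + Σ_{ℓ≠r} ξ_ℓ). Then for each fixed r, the cumulative distribution function of SINR_r is F(x) = 1 - e^{-x/ρ_R} / (1+x)^{m-1} for x ≥ 0. -/

import Mathlib

open MeasureTheory ProbabilityTheory Real Finset

lemma sinr_ae_nonneg {Ω : Type*} [MeasureSpace Ω] (f : Ω → ℝ)
    (hcdf : ∀ t, ℙ {ω | f ω ≤ t} = ENNReal.ofReal (1 - Real.exp (-t))) :
    ∀ᵐ ω ∂(ℙ : Measure Ω), 0 ≤ f ω := by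
  have h : ℙ {ω | f ω < 0} = 0 := by
    have hsub : {ω | f ω < 0} ⊆ ⋃ n : ℕ, {ω | f ω ≤ -(1 / (n + 1))} := by
      intro ω hω
      obtain ⟨n, hn⟩ := exists_nat_one_div_lt (K := ℝ) (neg_pos.2 hω)
      exact Set.mem_iUnion.2 ⟨n, by simp only [Set.mem_setOf_eq]; linarith⟩
    refine measure_mono_null hsub (measure_iUnion_null fun n => ?_)
    rw [hcdf]
    rw [ENNReal.ofReal_eq_zero]
    have : (1:ℝ) ≤ Real.exp (-(-(1 / (n + 1:ℝ)))) := by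
      rw [neg_neg]
      exact Real.one_le_exp (by positivity)
    linarith
  rw [ae_iff]
  simpa only [not_le] using h

lemma sinr_exp_factor {Ω : Type*} [MeasureSpace Ω] [IsProbabilityMeasure (ℙ : Measure Ω)]
    (f : Ω → ℝ) (hf : Measurable f)
    (hcdf : ∀ t, ℙ {ω | f ω ≤ t} = ENNReal.ofReal (1 - Real.exp (-t)))
    (x : ℝ) (hx : 0 ≤ x) :
    ∫⁻ ω, ENNReal.ofReal (Real.exp (-x * f ω)) ∂ℙ = ENNReal.ofReal ((1 + x)⁻¹) := by
  have h1x : (0:ℝ) < 1 + x := by linarith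
  have hprob : IsProbabilityMeasure (expMeasure 1) := isProbabilityMeasure_expMeasure one_pos
  have hmap : (ℙ : Measure Ω).map f = expMeasure 1 := by
    have : IsProbabilityMeasure ((ℙ : Measure Ω).map f) :=
      Measure.isProbabilityMeasure_map hf.aemeasurable
    refine Measure.ext_of_Iic _ _ (fun a => ?_)
    rw [Measure.map_apply hf measurableSet_Iic]
    have hpre : f ⁻¹' Set.Iic a = {ω | f ω ≤ a} := rfl
    rw [hpre, hcdf a, ← ProbabilityTheory.ofReal_cdf]
    have he : cdf (expMeasure 1) a = if 0 ≤ a then 1 - Real.exp (-(1 * a)) else 0 :=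
      cdf_expMeasure_eq one_pos a
    rw [he]
    split_ifs with h
    · norm_num
    · push_neg at h
      rw [ENNReal.ofReal_zero, ENNReal.ofReal_eq_zero]
      have : (1:ℝ) ≤ Real.exp (-a) := Real.one_le_exp (by linarith)
      linarith
  have hg : Measurable fun u : ℝ => ENNReal.ofReal (Real.exp (-x * u)) :=
    (measurable_id.const_mul (-x)).exp.ennreal_ofReal
  have hpdf1 : Measurable (exponentialPDF 1) :=
    (measurable_exponentialPDFReal 1).ennreal_ofReal
  have hdens : expMeasure 1 = (volume : Measure ℝ).withDensity (exponentialPDF 1) := rfl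
  calc ∫⁻ ω, ENNReal.ofReal (Real.exp (-x * f ω)) ∂ℙ
      = ∫⁻ u, ENNReal.ofReal (Real.exp (-x * u)) ∂((ℙ : Measure Ω).map f) :=
        (lintegral_map hg hf).symm
    _ = ∫⁻ u, (exponentialPDF 1 * fun u => ENNReal.ofReal (Real.exp (-x * u))) u := by
        rw [hmap, hdens, lintegral_withDensity_eq_lintegral_mul volume hpdf1 hg]
    _ = ∫⁻ u, ENNReal.ofReal ((1 + x)⁻¹) * exponentialPDF (1 + x) u := by
        refine lintegral_congr fun u => ?_
        rcases lt_or_ge u 0 with h | h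
        · simp [exponentialPDF_of_neg h]
        · rw [Pi.mul_apply, exponentialPDF_of_nonneg h, exponentialPDF_of_nonneg h,
            ← ENNReal.ofReal_mul (by positivity), ← ENNReal.ofReal_mul (by positivity)]
          congr 1
          rw [one_mul, inv_mul_cancel_left₀ h1x.ne', ← Real.exp_add]
          congr 1
          ring
    _ = ENNReal.ofReal ((1 + x)⁻¹) * 1 := by
        have hpdfm : Measurable (exponentialPDF (1 + x)) :=
          (measurable_exponentialPDFReal (1 + x)).ennreal_ofReal
        rw [lintegral_const_mul _ hpdfm, lintegral_exponentialPDF_eq_one h1x]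
    _ = ENNReal.ofReal ((1 + x)⁻¹) := mul_one _

/-- The cdf of `SINR_r = ξ_r / (1/ρ_R + Σ_{ℓ≠r} ξ_ℓ)` for i.i.d. `Exp(1)` gains
`ξ_1,…,ξ_m` is `F(x) = 1 - e^{-x/ρ_R}/(1+x)^{m-1}` for `x ≥ 0`. -/
theorem sinr_cdf
    {Ω : Type*} [MeasureSpace Ω] [IsProbabilityMeasure (ℙ : Measure Ω)]
    {m : ℕ} (hm : 1 ≤ m) (ξ : Fin m → Ω → ℝ)
    (hmeas : ∀ ℓ, Measurable (ξ ℓ))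
    (hindep : iIndepFun ξ ℙ)
    (hcdf : ∀ ℓ x, ℙ {ω | ξ ℓ ω ≤ x} = ENNReal.ofReal (1 - Real.exp (-x)))
    (ρR : ℝ) (hρ : 0 < ρR) (r : Fin m) (x : ℝ) (hx : 0 ≤ x) :
    ℙ {ω | ξ r ω / (1 / ρR + ∑ ℓ ∈ Finset.univ.erase r, ξ ℓ ω) ≤ x}
      = ENNReal.ofReal (1 - Real.exp (-x / ρR) / (1 + x) ^ (m - 1)) := by
  classical
  have h1x : (0:ℝ) < 1 + x := by linarith
  set c : ℝ := 1 / ρR with hc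
  have hcpos : 0 < c := by positivity
  set s : Finset (Fin m) := Finset.univ.erase r with hs
  set S : Ω → ℝ := fun ω => ∑ ℓ ∈ s, ξ ℓ ω with hSdef
  have hSmeas : Measurable S := Finset.measurable_sum s (fun ℓ _ => hmeas ℓ)
  have hnn : ∀ᵐ ω ∂(ℙ : Measure Ω), ∀ ℓ, 0 ≤ ξ ℓ ω :=
    ae_all_iff.2 fun ℓ => sinr_ae_nonneg (ξ ℓ) (hcdf ℓ)
  have hSnn : ∀ᵐ ω ∂(ℙ : Measure Ω), 0 ≤ S ω :=
    hnn.mono fun ω h => Finset.sum_nonneg fun ℓ _ => h ℓ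
  -- Step 1: rewrite the event
  have hev : ℙ {ω | ξ r ω / (c + S ω) ≤ x} = ℙ {ω | ξ r ω ≤ x * c + x * S ω} := by
    apply measure_congr
    rw [Filter.eventuallyEq_set]
    filter_upwards [hSnn] with ω hω
    show ξ r ω / (c + S ω) ≤ x ↔ ξ r ω ≤ x * c + x * S ω
    rw [div_le_iff₀ (by linarith : (0:ℝ) < c + S ω), mul_add]
  -- Step 2: independence, joint law
  have hind : IndepFun S (ξ r) ℙ := by
    have h := hindep.indepFun_finsetSum_of_notMem hmeas (Finset.notMem_erase r Finset.univ)
    have hSeq : (∑ j ∈ s, ξ j) = S := by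
      funext ω; rw [Finset.sum_apply]
    rwa [hSeq] at h
  have hmapjoint : (ℙ : Measure Ω).map (fun ω => (S ω, ξ r ω))
      = ((ℙ : Measure Ω).map S).prod ((ℙ : Measure Ω).map (ξ r)) :=
    (indepFun_iff_map_prod_eq_prod_map_map hSmeas.aemeasurable (hmeas r).aemeasurable).1 hind
  have hprobS : IsProbabilityMeasure ((ℙ : Measure Ω).map S) :=
    Measure.isProbabilityMeasure_map hSmeas.aemeasurable
  have hsetmeas : MeasurableSet {p : ℝ × ℝ | p.2 ≤ x * c + x * p.1} :=
    measurableSet_le measurable_snd (measurable_const.add (measurable_fst.const_mul x))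
  have hIic : ∀ t : ℝ, ((ℙ : Measure Ω).map (ξ r)) (Set.Iic t)
      = 1 - ENNReal.ofReal (Real.exp (-t)) := by
    intro t
    rw [Measure.map_apply (hmeas r) measurableSet_Iic]
    have hpre : ξ r ⁻¹' Set.Iic t = {ω | ξ r ω ≤ t} := rfl
    rw [hpre, hcdf, ENNReal.ofReal_sub _ (Real.exp_pos _).le, ENNReal.ofReal_one]
  have hstep : ℙ {ω | ξ r ω ≤ x * c + x * S ω}
      = ∫⁻ sv, (1 - ENNReal.ofReal (Real.exp (-(x * c + x * sv)))) ∂((ℙ : Measure Ω).map S) := by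
    have hpre : {ω | ξ r ω ≤ x * c + x * S ω}
        = (fun ω => (S ω, ξ r ω)) ⁻¹' {p : ℝ × ℝ | p.2 ≤ x * c + x * p.1} := rfl
    rw [hpre, ← Measure.map_apply (hSmeas.prodMk (hmeas r)) hsetmeas, hmapjoint,
      Measure.prod_apply hsetmeas]
    refine lintegral_congr fun sv => ?_
    have : (Prod.mk sv ⁻¹' {p : ℝ × ℝ | p.2 ≤ x * c + x * p.1}) = Set.Iic (x * c + x * sv) := rfl
    rw [this, hIic]
  -- Step 3: integrability facts
  have hintf : ∀ (f : Ω → ℝ), Measurable f → (∀ᵐ ω ∂(ℙ : Measure Ω), 0 ≤ f ω) →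
      Integrable (fun ω => Real.exp (-x * f ω)) ℙ := by
    intro f hf hfnn
    refine Integrable.mono' (integrable_const 1)
      ((hf.const_mul (-x)).exp.aestronglyMeasurable) ?_
    filter_upwards [hfnn] with ω hω
    rw [Real.norm_eq_abs, Real.abs_exp]
    exact Real.exp_le_one_iff.2 (by nlinarith)
  -- Step 4: each mgf factor
  have hfac : ∀ ℓ, mgf (ξ ℓ) ℙ (-x) = (1 + x)⁻¹ := by
    intro ℓ
    have h1 : ENNReal.ofReal (mgf (ξ ℓ) ℙ (-x))
        = ∫⁻ ω, ENNReal.ofReal (Real.exp (-x * ξ ℓ ω)) ∂ℙ :=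
      ofReal_integral_eq_lintegral_ofReal
        (hintf (ξ ℓ) (hmeas ℓ) (sinr_ae_nonneg (ξ ℓ) (hcdf ℓ)))
        (Filter.Eventually.of_forall fun ω => (Real.exp_pos _).le)
    rw [sinr_exp_factor (ξ ℓ) (hmeas ℓ) (hcdf ℓ) x hx] at h1
    exact (ENNReal.ofReal_eq_ofReal_iff mgf_nonneg (by positivity)).1 h1
  -- Step 5: the sum
  have hsum : ∫⁻ ω, ENNReal.ofReal (Real.exp (-x * S ω)) ∂ℙ
      = ENNReal.ofReal ((1 + x)⁻¹ ^ (m - 1)) := by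
    rw [← ofReal_integral_eq_lintegral_ofReal (hintf S hSmeas hSnn)
      (Filter.Eventually.of_forall fun ω => (Real.exp_pos _).le)]
    congr 1
    have hmgfS : ∫ ω, Real.exp (-x * S ω) ∂ℙ = mgf (∑ i ∈ s, ξ i) ℙ (-x) := by
      simp only [mgf, hSdef, Finset.sum_apply]
    rw [hmgfS, hindep.mgf_sum hmeas s]
    have hcard : s.card = m - 1 := by
      rw [hs, Finset.card_erase_of_mem (Finset.mem_univ r), Finset.card_univ, Fintype.card_fin]
    rw [Finset.prod_congr rfl (fun i _ => hfac i), Finset.prod_const, hcard]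
  -- Step 6: compute the main lintegral
  have hgmeas : Measurable fun sv : ℝ => ENNReal.ofReal (Real.exp (-(x * c + x * sv))) :=
    (((measurable_id.const_mul x).const_add (x * c)).neg.exp).ennreal_ofReal
  have hgint : ∫⁻ sv, ENNReal.ofReal (Real.exp (-(x * c + x * sv))) ∂((ℙ : Measure Ω).map S)
      = ENNReal.ofReal (Real.exp (-(x * c))) * ENNReal.ofReal ((1 + x)⁻¹ ^ (m - 1)) := by
    rw [lintegral_map hgmeas hSmeas]
    have heq : ∀ ω, ENNReal.ofReal (Real.exp (-(x * c + x * S ω)))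
        = ENNReal.ofReal (Real.exp (-(x * c))) * ENNReal.ofReal (Real.exp (-x * S ω)) := by
      intro ω
      rw [← ENNReal.ofReal_mul (Real.exp_pos _).le, ← Real.exp_add]
      congr 2
      ring
    simp_rw [heq]
    rw [lintegral_const_mul _ ((hSmeas.const_mul (-x)).exp.ennreal_ofReal), hsum]
  have hgfin : ∫⁻ sv, ENNReal.ofReal (Real.exp (-(x * c + x * sv))) ∂((ℙ : Measure Ω).map S) ≠ ⊤ := by
    rw [hgint]
    exact ENNReal.mul_ne_top ENNReal.ofReal_ne_top ENNReal.ofReal_ne_top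
  have hSnn' : ∀ᵐ sv ∂((ℙ : Measure Ω).map S), 0 ≤ sv :=
    (ae_map_iff hSmeas.aemeasurable measurableSet_Ici).2 hSnn
  have hmain : ℙ {ω | ξ r ω ≤ x * c + x * S ω}
      = 1 - ENNReal.ofReal (Real.exp (-(x * c))) * ENNReal.ofReal ((1 + x)⁻¹ ^ (m - 1)) := by
    have hle : (fun sv : ℝ => ENNReal.ofReal (Real.exp (-(x * c + x * sv))))
        ≤ᵐ[(ℙ : Measure Ω).map S] fun _ => 1 := by
      filter_upwards [hSnn'] with sv hsv
      refine ENNReal.ofReal_le_one.2 (Real.exp_le_one_iff.2 ?_)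
      have : 0 ≤ x * c + x * sv := by positivity
      linarith
    rw [hstep, lintegral_sub hgmeas hgfin hle, lintegral_one, measure_univ, hgint]
  -- conclusion
  have hgoal : {ω | ξ r ω / (c + ∑ ℓ ∈ s, ξ ℓ ω) ≤ x} = {ω | ξ r ω / (c + S ω) ≤ x} := rfl
  show ℙ {ω | ξ r ω / (c + ∑ ℓ ∈ s, ξ ℓ ω) ≤ x} = _
  rw [hgoal, hev, hmain]
  have hrhs : 1 - Real.exp (-x / ρR) / (1 + x) ^ (m - 1)
      = 1 - Real.exp (-(x * c)) * (1 + x)⁻¹ ^ (m - 1) := by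
    rw [hc]
    rw [div_eq_mul_inv (Real.exp _), inv_pow]
    congr 3
    field_simp
  rw [hrhs, ENNReal.ofReal_sub _ (by positivity), ENNReal.ofReal_one,
    ENNReal.ofReal_mul (Real.exp_pos _).le]
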